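/- Let α = [0;2,\overline{r}] with r ≥ 1 and let σ be the standard morphism σ(a) = s₁, σ(b) = s₁^{r−1}s₀. Then σ^{m+1}(b) = s_{m+1}^{r−1} sₘ for all m ∈ ℕ, and consequently the adjoining singular words satisfy, for every m ≥ −1: vₘ = a·σ^{m+1}(b)·b⁻¹ if m is odd, and vₘ = b·σ^{m+1}(b)·a⁻¹ if m is even. -/
import Mathlib


/-- The two-letter alphabet 𝒜 = {a, b}. -/
inductive AB : Type
  | a : AB
  | b : AB
deriving DecidableEq, Repr

/-- Apply a morphism (determined by its images on the letters) to a finite word. -/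
def applyM (g : AB → List AB) (w : List AB) : List AB := w.flatMap g

/-- The exchange morphism E : a ↦ b, b ↦ a. -/
def Em : AB → List AB
  | AB.a => [AB.b]
  | AB.b => [AB.a]

/-- The morphism φ : a ↦ ab, b ↦ a. -/
def phim : AB → List AB
  | AB.a => [AB.a, AB.b]
  | AB.b => [AB.a]

/-- Composition of morphisms: `compM g h` applies `h` first, then `g`. -/
def compM (g h : AB → List AB) : AB → List AB := fun c => applyM g (h c)

/-- Powers of a morphism. -/
def mpow (g : AB → List AB) : ℕ → AB → List AB
  | 0 => fun c => [c]
  | n + 1 => compM g (mpow g n)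

/-- A morphism is standard iff it is a composition of E and φ (in any number and order). -/
inductive IsStandard : (AB → List AB) → Prop
  | id : IsStandard (fun c => [c])
  | compE {ψ : AB → List AB} : IsStandard ψ → IsStandard (compM ψ Em)
  | compPhi {ψ : AB → List AB} : IsStandard ψ → IsStandard (compM ψ phim)

/-- `IsRightConj ψ ξ k` : ξ is the k-th right conjugate of ψ, i.e. there is a word u
of length k with ψ(w)u = uξ(w) for all finite words w. -/
def IsRightConj (ψ ξ : AB → List AB) (k : ℕ) : Prop :=
  ∃ u : List AB, u.length = k ∧ ∀ w : List AB, applyM ψ w ++ u = u ++ applyM ξ w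

/-- w^k (power of a finite word under concatenation). -/
def lpow (w : List AB) : ℕ → List AB
  | 0 => []
  | k + 1 => w ++ lpow w k

/-- Standard sequence associated with a directive sequence (d₁, d₂, …) (here `d`
is indexed so that `d i` is dᵢ for i ≥ 1): `sseq d 0 = s₋₁ = b`, `sseq d (n+1) = sₙ`,
with s₀ = a and sₙ = sₙ₋₁^{dₙ} sₙ₋₂. -/
def sseq (d : ℕ → ℕ) : ℕ → List AB
  | 0 => [AB.b]
  | 1 => [AB.a]
  | n + 2 => lpow (sseq d (n + 1)) (d (n + 1)) ++ sseq d n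

/-- Convergent denominators: `qseq d n` = qₙ = |sₙ| (q₀ = 1, q₁ = 1 + d₁,
qₙ = dₙqₙ₋₁ + qₙ₋₂). -/
def qseq (d : ℕ → ℕ) : ℕ → ℕ
  | 0 => 1
  | 1 => 1 + d 1
  | n + 2 => d (n + 2) * qseq d (n + 1) + qseq d n

/-- `PrefInf u x` : the finite word u is a prefix of the infinite word x. -/
def PrefInf (u : List AB) (x : ℕ → AB) : Prop :=
  ∀ i, i < u.length → u.getD i AB.a = x i

/-- Image of an infinite word under a (non-erasing) morphism, letter by letter. -/
def applyInf (g : AB → List AB) (x : ℕ → AB) : ℕ → AB :=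
  fun i => (applyM g ((List.range (i + 1)).map x)).getD i AB.a

/-- `IsProdInf u x` : the infinite word x is the infinite product u 0 · u 1 · u 2 ⋯,
i.e. every finite partial product is a prefix of x. -/
def IsProdInf (u : ℕ → List AB) (x : ℕ → AB) : Prop :=
  ∀ n, PrefInf (((List.range n).map u).flatten) x

/-- Adjoining singular words: `vword d k` is the adjoining singular word v_{k-1}
(so `vword d 0 = v₋₁`), where vₙ = a·sₙ₊₁^{d_{n+2}−1}sₙ·b⁻¹ for n odd and
vₙ = b·sₙ₊₁^{d_{n+2}−1}sₙ·a⁻¹ for n even. -/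
def vword (d : ℕ → ℕ) (k : ℕ) : List AB :=
  (if k % 2 = 0 then AB.a else AB.b) ::
    (lpow (sseq d (k + 1)) (d (k + 1) - 1) ++ sseq d k).dropLast

/-- Singular words: `wword d k` is the singular word w_{k-2}
(w₋₂ = ε, w₋₁ = a, w₀ = b, and wₙ = a·sₙ·b⁻¹ for n ≥ 1 odd, wₙ = b·sₙ·a⁻¹ for n even). -/
def wword (d : ℕ → ℕ) : ℕ → List AB
  | 0 => []
  | 1 => [AB.a]
  | 2 => [AB.b]
  | k + 3 =>
      (if (k + 1) % 2 = 1 then AB.a else AB.b) :: (sseq d (k + 2)).dropLast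

/-- The standard morphism σ associated with a type (i) Sturm number
α = [0;1+d₁,\overline{d₂,…,dₙ}] : σ(a) = sₙ₋₁, σ(b) = sₙ₋₁^{dₙ−d₁} sₙ₋₂. -/
def sigmaGen (d : ℕ → ℕ) (n : ℕ) : AB → List AB
  | AB.a => sseq d n
  | AB.b => lpow (sseq d n) (d n - d 1) ++ sseq d (n - 1)

/-- The directive sequence of α = [0;2,\overline{r}] : d₁ = 1, dᵢ = r for i ≥ 2. -/
def dseq (r : ℕ) : ℕ → ℕ := fun i => if i ≤ 1 then 1 else r

/-- The directive sequence of 1 − α = [0;1,d₁,\overline{d₂,…,dₙ}] obtained from that of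
α = [0;1+d₁,\overline{d₂,…,dₙ}] : ê₁ = 0 and êᵢ = dᵢ₋₁ for i ≥ 2. -/
def dhat (d : ℕ → ℕ) : ℕ → ℕ := fun i => if i ≤ 1 then 0 else d (i - 1)

/-- `Generates ψ c x` : ψ is prolongable on the letter c and x = ψ^ω(c), i.e. every
ψ^m(c) is a prefix of x. -/
def Generates (ψ : AB → List AB) (c : AB) (x : ℕ → AB) : Prop :=
  (∃ w : List AB, w ≠ [] ∧ ψ c = c :: w) ∧ ∀ m, PrefInf (mpow ψ m c) x

/-- Fibonacci numbers, shifted: `fibw k = F_{k-1}`, so fibw 0 = F₋₁ = 1,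
fibw 1 = F₀ = 1, Fₙ = Fₙ₋₁ + Fₙ₋₂. -/
def fibw : ℕ → ℕ
  | 0 => 1
  | 1 => 1
  | n + 2 => fibw (n + 1) + fibw n

/-- `HasCF γ a` : γ has continued fraction expansion [0; a 1, a 2, a 3, …]. -/
def HasCF (γ : ℝ) (a : ℕ → ℕ) : Prop :=
  ∃ x : ℕ → ℝ, x 0 = γ ∧ (∀ i, 0 < x i ∧ x i < 1) ∧
    ∀ i, 1 / x i = (a (i + 1) : ℝ) + x (i + 1)

/-- γ has a continued fraction expansion of type (i):
γ = [0;1+d₁,\overline{d₂,…,dₙ}] < 1/2 with dₙ ≥ d₁ ≥ 1. -/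
def CFTypeI (γ : ℝ) : Prop :=
  ∃ a : ℕ → ℕ, HasCF γ a ∧ γ < 1 / 2 ∧
    ∃ n : ℕ, 2 ≤ n ∧ ∃ d : ℕ → ℕ,
      (∀ i, 1 ≤ i → 1 ≤ d i) ∧ a 1 = 1 + d 1 ∧ (∀ i, 2 ≤ i → a i = d i) ∧
      (∀ i, 2 ≤ i → d (i + (n - 1)) = d i) ∧ d 1 ≤ d n

/-- γ has a continued fraction expansion of type (ii):
γ = [0;1,d₁,\overline{d₂,…,dₙ}] > 1/2 with dₙ ≥ d₁. -/
def CFTypeII (γ : ℝ) : Prop :=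
  ∃ a : ℕ → ℕ, HasCF γ a ∧ 1 / 2 < γ ∧
    ∃ n : ℕ, 2 ≤ n ∧ ∃ d : ℕ → ℕ,
      (∀ i, 1 ≤ i → 1 ≤ d i) ∧ a 1 = 1 ∧ (∀ i, 2 ≤ i → a i = d (i - 1)) ∧
      (∀ i, 2 ≤ i → d (i + (n - 1)) = d i) ∧ d 1 ≤ d n

/-- A Sturm number: an irrational γ ∈ (0,1) whose continued fraction expansion is of
type (i) or type (ii). -/
def IsSturmNumber (γ : ℝ) : Prop :=
  Irrational γ ∧ 0 < γ ∧ γ < 1 ∧ (CFTypeI γ ∨ CFTypeII γ)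


lemma applyM_append (g : AB → List AB) (u v : List AB) :
    applyM g (u ++ v) = applyM g u ++ applyM g v := by
  simp [applyM]

lemma applyM_lpow (g : AB → List AB) (w : List AB) (k : ℕ) :
    applyM g (lpow w k) = lpow (applyM g w) k := by
  induction k with
  | zero => simp [lpow, applyM]
  | succ k ih => simp [lpow, applyM_append, ih]

lemma lpow_succ (w : List AB) (k : ℕ) : lpow w (k + 1) = w ++ lpow w k := rfl

lemma sigma_sseq (r : ℕ) (hr : 1 ≤ r) (n : ℕ) :
    applyM (sigmaGen (dseq r) 2) (sseq (dseq r) (n + 1)) = sseq (dseq r) (n + 2) := by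
  induction n using Nat.twoStepInduction with
  | zero => simp [applyM, sseq, sigmaGen, dseq, lpow]
  | one =>
      have h : sseq (dseq r) 2 = [AB.a, AB.b] := by simp [sseq, dseq, lpow]
      have hr' : lpow (sseq (dseq r) 2) r =
          sseq (dseq r) 2 ++ lpow (sseq (dseq r) 2) (r - 1) := by
        obtain ⟨t, rfl⟩ := Nat.exists_eq_add_of_le hr
        simp [lpow_succ, Nat.add_sub_cancel_left, Nat.add_comm]
      show applyM (sigmaGen (dseq r) 2) (sseq (dseq r) 2) = sseq (dseq r) 3
      rw [h]
      show sigmaGen (dseq r) 2 AB.a ++ (sigmaGen (dseq r) 2 AB.b ++ []) =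
        sseq (dseq r) 3
      simp only [sigmaGen, sseq, List.append_nil]
      show sseq (dseq r) 2 ++ (lpow (sseq (dseq r) 2) (dseq r 2 - dseq r 1)
          ++ sseq (dseq r) 1) = lpow (sseq (dseq r) 2) (dseq r 2) ++ sseq (dseq r) 1
      have : dseq r 2 = r := by simp [dseq]
      have h1 : dseq r 1 = 1 := by simp [dseq]
      rw [this, h1, ← List.append_assoc, ← hr']
  | more n ih1 ih2 =>
      have hd : ∀ k, dseq r (k + 2) = r := by intro k; simp [dseq]
      show applyM (sigmaGen (dseq r) 2) (sseq (dseq r) (n + 3)) = sseq (dseq r) (n + 4)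
      have e3 : sseq (dseq r) (n + 3) =
          lpow (sseq (dseq r) (n + 2)) (dseq r (n + 2)) ++ sseq (dseq r) (n + 1) := rfl
      have e4 : sseq (dseq r) (n + 4) =
          lpow (sseq (dseq r) (n + 3)) (dseq r (n + 3)) ++ sseq (dseq r) (n + 2) := rfl
      rw [e3, e4, applyM_append, applyM_lpow, ih1, ih2]
      have : dseq r (n + 3) = dseq r (n + 2) := by simp [dseq]
      rw [this]

/-- For α = [0;2,\overline{r}] (r ≥ 1) and σ(a) = s₁, σ(b) = s₁^{r−1}s₀:
σ^{m+1}(b) = s_{m+1}^{r−1} sₘ for all m ∈ ℕ, and consequently for every m ≥ −1,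
vₘ = a·σ^{m+1}(b)·b⁻¹ if m is odd and vₘ = b·σ^{m+1}(b)·a⁻¹ if m is even.
(Here `vword (dseq r) k` is v_{k−1}, so the second claim is stated for k = m + 1 ≥ 0,
with m odd iff k even.) -/
theorem statement12 (r : ℕ) (hr : 1 ≤ r) :
    (∀ m : ℕ, mpow (sigmaGen (dseq r) 2) (m + 1) AB.b =
        lpow (sseq (dseq r) (m + 2)) (r - 1) ++ sseq (dseq r) (m + 1)) ∧
    (∀ k : ℕ, vword (dseq r) k =
        (if k % 2 = 0 then AB.a else AB.b) ::
          (mpow (sigmaGen (dseq r) 2) k AB.b).dropLast) := by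
  have d2 : dseq r 2 = r := by simp [dseq]
  have d1 : dseq r 1 = 1 := by simp [dseq]
  have part1 : ∀ m : ℕ, mpow (sigmaGen (dseq r) 2) (m + 1) AB.b =
      lpow (sseq (dseq r) (m + 2)) (r - 1) ++ sseq (dseq r) (m + 1) := by
    intro m
    induction m with
    | zero =>
        show applyM (sigmaGen (dseq r) 2) [AB.b] = _
        simp [applyM, sigmaGen, d2, d1]
    | succ m ih =>
        show applyM (sigmaGen (dseq r) 2) (mpow (sigmaGen (dseq r) 2) (m + 1) AB.b) = _
        rw [ih, applyM_append, applyM_lpow, sigma_sseq r hr, sigma_sseq r hr]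
  refine ⟨part1, fun k => ?_⟩
  cases k with
  | zero =>
      simp [vword, mpow, sseq, dseq, lpow, List.dropLast]
  | succ k =>
      rw [part1 k]
      have : dseq r (k + 1 + 1) = r := by simp [dseq]
      simp [vword, this]
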